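/- Every copositive plus matrix is an Ẽ_0^s-matrix, i.e. it is semimonotone star and for every solution x of LCP(0, A), (Aᵀx)_i ≠ 0 implies (Ax)_i ≠ 0 for all i. -/

import Mathlib

/-- A is semimonotone (E₀). -/
def IsSemimonotone {n : ℕ} (A : Matrix (Fin n) (Fin n) ℝ) : Prop :=
  ∀ x : Fin n → ℝ, 0 ≤ x → x ≠ 0 → ∃ i, 0 < x i ∧ 0 ≤ A.mulVec x i

/-- A is semimonotone star (E₀ˢ). -/
def IsSemimonotoneStar {n : ℕ} (A : Matrix (Fin n) (Fin n) ℝ) : Prop :=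
  IsSemimonotone A ∧
    ∀ x : Fin n → ℝ, 0 ≤ x → 0 ≤ A.mulVec x → dotProduct x (A.mulVec x) = 0 →
      A.transpose.mulVec x ≤ 0

/-- A is copositive plus (C₀⁺). -/
def IsCopositivePlus {n : ℕ} (A : Matrix (Fin n) (Fin n) ℝ) : Prop :=
  (∀ x : Fin n → ℝ, 0 ≤ x → 0 ≤ dotProduct x (A.mulVec x)) ∧
    ∀ x : Fin n → ℝ, 0 ≤ x → dotProduct x (A.mulVec x) = 0 →
      (A + A.transpose).mulVec x = 0

/-- A is an Ẽ₀ˢ-matrix. -/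
def IsE0sTilde {n : ℕ} (A : Matrix (Fin n) (Fin n) ℝ) : Prop :=
  IsSemimonotoneStar A ∧
    ∀ x : Fin n → ℝ, 0 ≤ x → 0 ≤ A.mulVec x → dotProduct x (A.mulVec x) = 0 →
      ∀ i, A.transpose.mulVec x i ≠ 0 → A.mulVec x i ≠ 0

theorem stmt9 {n : ℕ} (A : Matrix (Fin n) (Fin n) ℝ)
    (hA : IsCopositivePlus A) : IsE0sTilde A := by
  obtain ⟨hcop, hplus⟩ := hA
  have key : ∀ x : Fin n → ℝ, 0 ≤ x → dotProduct x (A.mulVec x) = 0 →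
      A.transpose.mulVec x = -(A.mulVec x) := by
    intro x hx hx0
    have h := hplus x hx hx0
    rw [Matrix.add_mulVec] at h
    funext i
    have := congrFun h i
    simp only [Pi.add_apply, Pi.zero_apply] at this
    simp only [Pi.neg_apply]
    linarith
  constructor
  · constructor
    · intro x hx hxne
      by_contra hcon
      push_neg at hcon
      have hterm : ∀ i, x i * A.mulVec x i ≤ 0 := by
        intro i
        rcases lt_or_eq_of_le (hx i) with hpos | heq
        · have := hcon i hpos
          exact le_of_lt (mul_neg_of_pos_of_neg hpos this)
        · rw [← heq]; simp
      obtain ⟨j, hj⟩ : ∃ j, x j ≠ 0 := Function.ne_iff.mp hxne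
      have hjpos : 0 < x j := lt_of_le_of_ne (hx j) (Ne.symm hj)
      have hjterm : x j * A.mulVec x j < 0 :=
        mul_neg_of_pos_of_neg hjpos (hcon j hjpos)
      have hsum : dotProduct x (A.mulVec x) < 0 := by
        unfold dotProduct
        exact Finset.sum_neg' (fun i _ => hterm i) ⟨j, Finset.mem_univ j, hjterm⟩
      linarith [hcop x hx]
    · intro x hx hmul hx0
      rw [key x hx hx0]
      intro i
      simp only [Pi.neg_apply, Pi.zero_apply]
      have := hmul i; simp only [Pi.zero_apply] at this; linarith
  · intro x hx _ hx0 i hne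
    rw [key x hx hx0] at hne
    simpa using hne
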